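/- arXiv:2003.14405 — 2 statements merged into one kernel-verified Lean document; each statement's English description precedes it below -/
import Mathlib

section
/- Let n be a positive integer. Then: (1) the symmetric Werner–Holevo channel Φ₀ on M_n has mixed-unitary rank equal to n(n+1)/2 if and only if there exists an orthogonal basis of the space of symmetric matrices S_n = {A ∈ M_n : Aᵀ = A} consisting entirely of unitary matrices; (2) if n is even, the anti-symmetric Werner–Holevo channel Φ₁ on M_n has mixed-unitary rank equal to n(n−1)/2 if and only if there exists an orthogonal basis of the space of skew-symmetric matrices K_n = {A ∈ M_n : Aᵀ = −A} consisting entirely of unitary matrices. -/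
open scoped Kronecker ComplexOrder
open Matrix

/-- Square complex matrices indexed by `α`. -/
abbrev Mat (α : Type*) := Matrix α α ℂ

/-- The Choi matrix `J(Φ) = ∑_{j,k} Φ(E_{j,k}) ⊗ E_{j,k}` of a linear map between
matrix spaces. -/
noncomputable def choiMatrix {α β : Type*} [Fintype α] [DecidableEq α]
    (Φ : Mat α →ₗ[ℂ] Mat β) : Matrix (β × α) (β × α) ℂ :=
  ∑ j : α, ∑ k : α, (Φ (Matrix.single j k 1)) ⊗ₖ (Matrix.single j k 1)

/-- The Choi rank of a linear map: the rank of its Choi matrix. -/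
noncomputable def choiRank {α β : Type*} [Fintype α] [DecidableEq α] [Fintype β]
    (Φ : Mat α →ₗ[ℂ] Mat β) : ℕ :=
  (choiMatrix Φ).rank

/-- `A` is a Kraus representation of `Φ` (with the trace-preservation condition). -/
def IsKrausRep {α β : Type*} [Fintype α] [DecidableEq α] [Fintype β] {r : ℕ}
    (Φ : Mat α →ₗ[ℂ] Mat β) (A : Fin r → Matrix β α ℂ) : Prop :=
  (∀ X, Φ X = ∑ k, A k * X * (A k)ᴴ) ∧ (∑ k, (A k)ᴴ * A k = 1)

/-- A quantum channel: a linear map admitting a Kraus representation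
`Φ(X) = ∑ₖ Aₖ X Aₖ*` with `∑ₖ Aₖ* Aₖ = 1`. -/
def IsChannel {α β : Type*} [Fintype α] [DecidableEq α] [Fintype β]
    (Φ : Mat α →ₗ[ℂ] Mat β) : Prop :=
  ∃ (r : ℕ) (A : Fin r → Matrix β α ℂ), IsKrausRep Φ A

/-- The dimension of the operator system `span{Aⱼᴴ Aₖ}` generated by a Kraus family. -/
noncomputable def krausOpSystemDim {α β : Type*} [Fintype α] [Fintype β] {r : ℕ}
    (A : Fin r → Matrix β α ℂ) : ℕ :=
  Module.finrank ℂ (Submodule.span ℂ {M : Mat α | ∃ j k, M = (A j)ᴴ * A k})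

/-- A mixed-unitary decomposition of `Φ` with `N` terms: a probability vector `p`
and unitaries `U` with `Φ(X) = ∑ₖ pₖ Uₖ X Uₖ*`. -/
def IsMixedUnitaryDecomp {α : Type*} [Fintype α] [DecidableEq α] {N : ℕ}
    (Φ : Mat α →ₗ[ℂ] Mat α) (p : Fin N → ℝ) (U : Fin N → Mat α) : Prop :=
  (∀ k, 0 ≤ p k) ∧ (∑ k, p k = 1) ∧ (∀ k, U k ∈ Matrix.unitaryGroup α ℂ) ∧
    (∀ X, Φ X = ∑ k, (p k : ℂ) • (U k * X * (U k)ᴴ))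

/-- `Φ` is a mixed-unitary channel. -/
def IsMixedUnitary {α : Type*} [Fintype α] [DecidableEq α]
    (Φ : Mat α →ₗ[ℂ] Mat α) : Prop :=
  ∃ (N : ℕ) (p : Fin N → ℝ) (U : Fin N → Mat α), IsMixedUnitaryDecomp Φ p U

/-- The mixed-unitary rank: the minimum number of unitary conjugations in a
mixed-unitary decomposition. -/
noncomputable def mixedUnitaryRank {α : Type*} [Fintype α] [DecidableEq α]
    (Φ : Mat α →ₗ[ℂ] Mat α) : ℕ :=
  sInf {N : ℕ | ∃ (p : Fin N → ℝ) (U : Fin N → Mat α), IsMixedUnitaryDecomp Φ p U}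

/-- A mixed-unitary decomposition is the *unique* mixed-unitary decomposition of `Φ` if
every other mixed-unitary decomposition of `Φ` arises by partitioning its terms into
groups of phase-multiples of the `Uₖ` with matching total probabilities. -/
def IsUniqueMixedUnitaryDecomp {α : Type*} [Fintype α] [DecidableEq α] {N : ℕ}
    (Φ : Mat α →ₗ[ℂ] Mat α) (p : Fin N → ℝ) (U : Fin N → Mat α) : Prop :=
  IsMixedUnitaryDecomp Φ p U ∧
    ∀ (t : ℕ) (q : Fin t → ℝ) (V : Fin t → Mat α), IsMixedUnitaryDecomp Φ q V →
      ∃ T : Fin t → Fin N,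
        (∀ j, ∃ c : ℂ, ‖c‖ = 1 ∧ V j = c • U (T j)) ∧
        (∀ k, p k = ∑ j ∈ Finset.univ.filter (fun j => T j = k), q j)

/-- `Φ` possesses a unique mixed-unitary decomposition. -/
def HasUniqueMixedUnitaryDecomp {α : Type*} [Fintype α] [DecidableEq α]
    (Φ : Mat α →ₗ[ℂ] Mat α) : Prop :=
  ∃ (N : ℕ) (p : Fin N → ℝ) (U : Fin N → Mat α), IsUniqueMixedUnitaryDecomp Φ p U

/-- `Ψ : M_α → M_N` is complementary to `Φ : M_α → M_α`: there is a Kraus representation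
`Φ(X) = ∑ₖ Bₖ X Bₖ*` with `N` terms such that `Ψ(X)` has `(j,k)` entry `⟨Bₖ* Bⱼ, X⟩`. -/
def IsComplementary {α : Type*} [Fintype α] [DecidableEq α] {N : ℕ}
    (Φ : Mat α →ₗ[ℂ] Mat α) (Ψ : Mat α →ₗ[ℂ] Mat (Fin N)) : Prop :=
  ∃ B : Fin N → Mat α, IsKrausRep Φ B ∧
    ∀ X, Ψ X = Matrix.of fun j k => ((((B k)ᴴ * B j)ᴴ) * X).trace

/-- A unitary channel: conjugation by a fixed unitary matrix. -/
def IsUnitaryChannel {α : Type*} [Fintype α] [DecidableEq α]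
    (Ψ : Mat α →ₗ[ℂ] Mat α) : Prop :=
  ∃ U ∈ Matrix.unitaryGroup α ℂ, ∀ X, Ψ X = U * X * Uᴴ

/-- A correlation matrix: positive semidefinite with unit diagonal. -/
def IsCorrelation {α : Type*} [Fintype α] (C : Mat α) : Prop :=
  C.PosSemidef ∧ ∀ i, C i i = 1

/-- A toroidal decomposition of `C` with `N` terms: `C = ∑ₖ pₖ uₖ uₖ*` where each `uₖ`
has all entries of modulus one. -/
def IsToroidalDecomp {α : Type*} [Fintype α] {N : ℕ}
    (C : Mat α) (p : Fin N → ℝ) (u : Fin N → α → ℂ) : Prop :=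
  (∀ k, 0 ≤ p k) ∧ (∑ k, p k = 1) ∧ (∀ k i, ‖u k i‖ = 1) ∧
    C = ∑ k, (p k : ℂ) • Matrix.vecMulVec (u k) (star (u k))

/-- A correlation matrix is toroidal if it is a convex combination of rank-one
correlation matrices `u u*` with `u` having unimodular entries. -/
def IsToroidal {α : Type*} [Fintype α] (C : Mat α) : Prop :=
  ∃ (N : ℕ) (p : Fin N → ℝ) (u : Fin N → α → ℂ), IsToroidalDecomp C p u

/-- The toroidal rank of a correlation matrix. -/
noncomputable def toroidalRank {α : Type*} [Fintype α] (C : Mat α) : ℕ :=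
  sInf {N : ℕ | ∃ (p : Fin N → ℝ) (u : Fin N → α → ℂ), IsToroidalDecomp C p u}


namespace Stmt15Aux


noncomputable def ip (A B : Mat (Fin n)) : ℂ := (Aᴴ * B).trace

lemma ip_eq_sum (A B : Mat (Fin n)) :
    ip A B = ∑ i, ∑ j, (starRingEnd ℂ) (A i j) * B i j := by
  rw [ip, Matrix.trace, Finset.sum_comm]
  simp [Matrix.mul_apply, Matrix.conjTranspose_apply, Matrix.diag]

lemma conj_ip (A B : Mat (Fin n)) : (starRingEnd ℂ) (ip A B) = ip B A := by
  simp only [ip_eq_sum, map_sum, _root_.map_mul, RingHomCompTriple.comp_apply,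
    Complex.conj_conj]
  simp [mul_comm]

lemma ip_transpose (A B : Mat (Fin n)) : ip Aᵀ B = ip A Bᵀ := by
  rw [ip_eq_sum, ip_eq_sum, Finset.sum_comm]
  simp [Matrix.transpose_apply]

lemma ip_smul_left (a : ℂ) (A B : Mat (Fin n)) :
    ip (a • A) B = (starRingEnd ℂ) a * ip A B := by
  simp [ip_eq_sum, Finset.mul_sum, mul_assoc]

lemma ip_smul_right (a : ℂ) (A B : Mat (Fin n)) : ip A (a • B) = a * ip A B := by
  rw [ip, ip, Matrix.mul_smul, Matrix.trace_smul, smul_eq_mul]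

lemma ip_add_right (A B C : Mat (Fin n)) : ip A (B + C) = ip A B + ip A C := by
  rw [ip, ip, ip, Matrix.mul_add, Matrix.trace_add]

lemma ip_sub_right (A B C : Mat (Fin n)) : ip A (B - C) = ip A B - ip A C := by
  rw [ip, ip, ip, Matrix.mul_sub, Matrix.trace_sub]

lemma ip_zero_right (A : Mat (Fin n)) : ip A 0 = 0 := by
  rw [ip]; simp

lemma ip_sum_right {ι : Type*} (s : Finset ι) (A : Mat (Fin n)) (f : ι → Mat (Fin n)) :
    ip A (∑ i ∈ s, f i) = ∑ i ∈ s, ip A (f i) := by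
  classical
  induction s using Finset.induction with
  | empty => simp [ip_zero_right]
  | insert _ _ h ih => rw [Finset.sum_insert h, Finset.sum_insert h, ip_add_right, ih]

lemma ip_self_eq_zero {A : Mat (Fin n)} (h : ip A A = 0) : A = 0 := by
  rw [ip_eq_sum] at h
  have h2 : ((∑ i, ∑ j, Complex.normSq (A i j) : ℝ) : ℂ) = 0 := by
    push_cast
    rw [← h]
    congr 1; funext i; congr 1; funext j
    rw [Complex.normSq_eq_conj_mul_self]
  rw [Complex.ofReal_eq_zero] at h2
  have h3 : ∀ i ∈ Finset.univ, ∀ j ∈ Finset.univ, Complex.normSq (A i j) = 0 := by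
    intro i _
    have hnn : ∀ i ∈ Finset.univ, (0:ℝ) ≤ ∑ j, Complex.normSq (A i j) :=
      fun i _ => Finset.sum_nonneg fun j _ => Complex.normSq_nonneg _
    have := (Finset.sum_eq_zero_iff_of_nonneg hnn).mp h2 i (Finset.mem_univ i)
    exact fun j _ => (Finset.sum_eq_zero_iff_of_nonneg
      (fun j _ => Complex.normSq_nonneg _)).mp this j (Finset.mem_univ j)
  ext i j
  exact Complex.normSq_eq_zero.mp (h3 i (Finset.mem_univ i) j (Finset.mem_univ j))

lemma ip_unitary_self {U : Mat (Fin n)} (hU : U ∈ Matrix.unitaryGroup (Fin n) ℂ) :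
    ip U U = n := by
  have h1 : Uᴴ * U = 1 := by
    rw [← Matrix.star_eq_conjTranspose]; exact Matrix.mem_unitaryGroup_iff'.mp hU
  rw [ip, h1, Matrix.trace_one]; simp

lemma mul_std_mul_apply (A B : Mat (Fin n)) (i j k l : Fin n) :
    (A * Matrix.single j l 1 * Bᴴ : Mat (Fin n)) i k = A i j * (starRingEnd ℂ) (B k l) := by
  simp [Matrix.mul_apply, Matrix.single, Matrix.conjTranspose_apply,
    ite_and, Finset.sum_ite_eq, Finset.mul_sum, Finset.sum_mul]

lemma trace_std (j l : Fin n) :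
    (Matrix.single j l (1:ℂ)).trace = if j = l then 1 else 0 := by
  simp [Matrix.trace, Matrix.single, Matrix.diag, ite_and, Finset.sum_ite_eq]
  simp [eq_comm]

lemma std_apply (j l a b : Fin n) :
    Matrix.single j l (1:ℂ) a b = if j = a ∧ l = b then 1 else 0 := rfl

lemma ite_rhs_eq (σ c : ℂ) (i j k l : Fin n) :
    c * (((if j = l then (1:ℂ) else 0) * if i = k then 1 else 0)
        + σ * if j = k ∧ l = i then 1 else 0)
    = c * ((if i = k then 1 else 0) * (if j = l then 1 else 0)
        + σ * ((if i = l then 1 else 0) * (if j = k then 1 else 0))) := by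
  by_cases h3 : i = l <;> by_cases h4 : j = k <;>
    simp [h3, h4, eq_comm] <;> split_ifs <;> ring

lemma term_eq (σ c x : ℂ) (i j k l : Fin n) :
    x * (c * ((if i = k then 1 else 0) * (if j = l then 1 else 0)
        + σ * ((if i = l then 1 else 0) * (if j = k then 1 else 0))))
    = (if i = k then 1 else 0) * (if l = j then c * x else 0)
        + σ * (if l = i then (if j = k then c * x else 0) else 0) := by
  by_cases h1 : i = k <;> by_cases h2 : j = l <;> by_cases h3 : i = l <;>
    by_cases h4 : j = k <;> simp [h1, h2, h3, h4, eq_comm] <;> split_ifs <;> ring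

def Eprop (σ c : ℂ) {t : ℕ} (p : Fin t → ℝ) (U : Fin t → Mat (Fin n)) : Prop :=
  ∀ i j k l : Fin n, (∑ m, (p m : ℂ) * (U m i j * (starRingEnd ℂ) (U m k l))) =
    c * ((if i = k then 1 else 0) * (if j = l then 1 else 0) +
      σ * ((if i = l then 1 else 0) * (if j = k then 1 else 0)))

lemma bridge1 (σ c : ℂ) {t : ℕ} (p : Fin t → ℝ) (U : Fin t → Mat (Fin n)) :
    (∀ X : Mat (Fin n), ∑ m, (p m : ℂ) • (U m * X * (U m)ᴴ)
        = c • (X.trace • (1 : Mat (Fin n)) + σ • Xᵀ)) ↔ Eprop σ c p U := by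
  constructor
  · intro h i j k l
    have h2 := congrFun (congrFun (h (Matrix.single j l 1)) i) k
    simp only [Matrix.sum_apply, Matrix.smul_apply, mul_std_mul_apply, smul_eq_mul,
      Matrix.add_apply, Matrix.transpose_apply, Matrix.one_apply, trace_std,
      std_apply] at h2
    rw [h2, ite_rhs_eq]
  · intro h X
    ext i k
    simp only [Matrix.sum_apply, Matrix.smul_apply, smul_eq_mul, Matrix.add_apply,
      Matrix.transpose_apply, Matrix.one_apply, Matrix.trace, Matrix.diag]
    have expand : ∀ m, (U m * X * (U m)ᴴ : Mat (Fin n)) i k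
        = ∑ j, ∑ l, X j l * (U m i j * (starRingEnd ℂ) (U m k l)) := by
      intro m
      simp only [Matrix.mul_apply, Matrix.conjTranspose_apply, Finset.sum_mul,
        starRingEnd_apply]
      rw [Finset.sum_comm]
      congr 1; funext j; congr 1; funext l; ring
    calc (∑ m, (p m : ℂ) * (U m * X * (U m)ᴴ : Mat (Fin n)) i k)
        = ∑ j, ∑ l, X j l * ∑ m, (p m : ℂ) * (U m i j * (starRingEnd ℂ) (U m k l)) := by
          simp only [expand, Finset.mul_sum]
          rw [Finset.sum_comm]
          congr 1; funext j
          rw [Finset.sum_comm]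
          congr 1; funext l
          congr 1; funext m; ring
      _ = ∑ j, ∑ l, ((if i = k then 1 else 0) * (if l = j then c * X j l else 0)
             + σ * (if l = i then (if j = k then c * X j l else 0) else 0)) := by
          congr 1; funext j; congr 1; funext l
          rw [h i j k l, term_eq]
      _ = (∑ j, (if i = k then 1 else 0) * (c * X j j)) + σ * (if k = k then c * X k i else 0) := by
          simp only [Finset.sum_add_distrib, Finset.sum_ite_eq', Finset.mem_univ,
            if_true, ← Finset.mul_sum]
      _ = c * ((∑ j, X j j) * (if i = k then 1 else 0) + σ * X k i) := by
          simp only [if_pos rfl, ← Finset.mul_sum, ← Finset.sum_mul]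
          split_ifs <;> ring

lemma ip_std (A : Mat (Fin n)) (k l : Fin n) :
    ip A (Matrix.single k l 1) = (starRingEnd ℂ) (A k l) := by
  rw [ip_eq_sum]
  simp [std_apply, ite_and, mul_ite, Finset.sum_ite_eq]

lemma ite_rhs_eq2 (σ c : ℂ) (i j k l : Fin n) :
    c * ((if k = i ∧ l = j then (1:ℂ) else 0) + σ * (if k = j ∧ l = i then 1 else 0))
    = c * ((if i = k then 1 else 0) * (if j = l then 1 else 0)
        + σ * ((if i = l then 1 else 0) * (if j = k then 1 else 0))) := by
  by_cases h1 : i = k <;> by_cases h2 : j = l <;> by_cases h3 : i = l <;>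
    by_cases h4 : j = k <;> simp [h1, h2, h3, h4, eq_comm] <;>
    first | tauto | (split_ifs <;> first | tauto | ring)

lemma term_eq2 (σ c x : ℂ) (i j k l : Fin n) :
    x * (c * ((if i = k then 1 else 0) * (if j = l then 1 else 0)
        + σ * ((if i = l then 1 else 0) * (if j = k then 1 else 0))))
    = (if k = i then 1 else 0) * (if l = j then c * x else 0)
        + σ * (if l = i then (if k = j then c * x else 0) else 0) := by
  by_cases h1 : i = k <;> by_cases h2 : j = l <;> by_cases h3 : i = l <;>
    by_cases h4 : j = k <;> simp [h1, h2, h3, h4, eq_comm] <;> split_ifs <;> ring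

def Hpt (σ c : ℂ) {t : ℕ} (p : Fin t → ℝ) (U : Fin t → Mat (Fin n)) : Prop :=
  ∀ A : Mat (Fin n), ∑ m, (p m : ℂ) • (ip (U m) A • U m) = c • (A + σ • Aᵀ)

lemma bridge2 (σ c : ℂ) {t : ℕ} (p : Fin t → ℝ) (U : Fin t → Mat (Fin n)) :
    Hpt σ c p U ↔ Eprop σ c p U := by
  constructor
  · intro h i j k l
    have h2 := congrFun (congrFun (h (Matrix.single k l 1)) i) j
    simp only [Matrix.smul_apply, Matrix.sum_apply, ip_std, smul_eq_mul,
      Matrix.add_apply, Matrix.transpose_apply, std_apply] at h2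
    rw [← ite_rhs_eq2 σ c i j k l, ← h2]
    congr 1; funext m; ring
  · intro h A
    ext i j
    simp only [Matrix.sum_apply, Matrix.smul_apply, smul_eq_mul, Matrix.add_apply,
      Matrix.transpose_apply]
    calc (∑ m, (p m : ℂ) * (ip (U m) A * U m i j))
        = ∑ k, ∑ l, A k l * ∑ m, (p m : ℂ) * (U m i j * (starRingEnd ℂ) (U m k l)) := by
          simp only [ip_eq_sum, Finset.sum_mul, Finset.mul_sum]
          rw [Finset.sum_comm]
          congr 1; funext k
          rw [Finset.sum_comm]
          congr 1; funext l
          congr 1; funext m; ring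
      _ = ∑ k, ∑ l, ((if k = i then 1 else 0) * (if l = j then c * A k l else 0)
             + σ * (if l = i then (if k = j then c * A k l else 0) else 0)) := by
          congr 1; funext k; congr 1; funext l
          rw [h i j k l, term_eq2]
      _ = (∑ k, (if k = i then 1 else 0) * (c * A k j)) + σ * (if j = j then c * A j i else 0) := by
          simp only [Finset.sum_add_distrib, Finset.sum_ite_eq', Finset.mem_univ,
            if_true, ← Finset.mul_sum]
      _ = c * (A i j + σ * A j i) := by
          simp only [if_pos rfl, ite_mul, one_mul, zero_mul, Finset.sum_ite_eq',
            Finset.mem_univ, if_true]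
          ring



section Core
variable {n : ℕ} {σ c : ℂ}

lemma sigma_mul_self (hσ : σ = 1 ∨ σ = -1) : σ * σ = 1 := by
  rcases hσ with h | h <;> rw [h] <;> ring

lemma smul_sigma_smul (hσ : σ = 1 ∨ σ = -1) (A : Mat (Fin n)) : σ • σ • A = A := by
  rw [smul_smul, sigma_mul_self hσ, one_smul]

lemma hpt_span {t : ℕ} {p : Fin t → ℝ} {U : Fin t → Mat (Fin n)}
    (hσ : σ = 1 ∨ σ = -1) (hc : c ≠ 0) (h : Hpt σ c p U) :
    ∀ A : Mat (Fin n), Aᵀ = σ • A → A ∈ Submodule.span ℂ (Set.range U) := by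
  intro A hA
  have h1 : ∑ m, (p m : ℂ) • (ip (U m) A • U m) = (2 * c) • A := by
    rw [h A, hA, smul_sigma_smul hσ]
    module
  have h2 : A = (2 * c)⁻¹ • ∑ m, (p m : ℂ) • (ip (U m) A • U m) := by
    rw [h1, smul_smul, inv_mul_cancel₀ (by simpa using hc), one_smul]
  rw [h2]
  refine Submodule.smul_mem _ _ (Submodule.sum_mem _ fun m _ => ?_)
  exact Submodule.smul_mem _ _ (Submodule.smul_mem _ _
    (Submodule.subset_span ⟨m, rfl⟩))

lemma pos_sum_zero {t : ℕ} {p : Fin t → ℝ} (hp : ∀ m, 0 ≤ p m) (z : Fin t → ℂ)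
    (h : ∑ m, (p m : ℂ) * (z m * (starRingEnd ℂ) (z m)) = 0) :
    ∀ m, 0 < p m → z m = 0 := by
  have h2 : ((∑ m, p m * Complex.normSq (z m) : ℝ) : ℂ) = 0 := by
    push_cast
    rw [← h]
    congr 1; funext m
    rw [Complex.mul_conj]
  rw [Complex.ofReal_eq_zero] at h2
  intro m hm
  have h3 := (Finset.sum_eq_zero_iff_of_nonneg
    (fun m _ => mul_nonneg (hp m) (Complex.normSq_nonneg _))).mp h2 m (Finset.mem_univ m)
  have h4 : Complex.normSq (z m) = 0 := by
    rcases mul_eq_zero.mp h3 with h | h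
    · exact absurd h (ne_of_gt hm)
    · exact h
  exact Complex.normSq_eq_zero.mp h4

lemma hpt_ip_anti {t : ℕ} {p : Fin t → ℝ} {U : Fin t → Mat (Fin n)}
    (hσ : σ = 1 ∨ σ = -1) (hp : ∀ m, 0 ≤ p m) (h : Hpt σ c p U) :
    ∀ B : Mat (Fin n), Bᵀ = (-σ) • B → ∀ m, 0 < p m → ip (U m) B = 0 := by
  intro B hB
  have hB0 : B + σ • Bᵀ = 0 := by
    rw [hB, smul_smul]
    have : σ * -σ = -1 := by rcases hσ with h' | h' <;> rw [h'] <;> ring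
    rw [this, neg_one_smul, add_neg_cancel]
  have h1 := h B
  rw [hB0, smul_zero] at h1
  have h2 := congrArg (ip B) h1
  rw [ip_sum_right, ip_zero_right] at h2
  have h3 : ∑ m, (p m : ℂ) * (ip (U m) B * (starRingEnd ℂ) (ip (U m) B)) = 0 := by
    rw [← h2]
    congr 1; funext m
    rw [ip_smul_right, ip_smul_right, ← conj_ip (U m) B]
  exact pos_sum_zero hp _ h3

lemma hpt_sym {t : ℕ} {p : Fin t → ℝ} {U : Fin t → Mat (Fin n)}
    (hσ : σ = 1 ∨ σ = -1) (hp : ∀ m, 0 ≤ p m) (h : Hpt σ c p U) :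
    ∀ m, 0 < p m → (U m)ᵀ = σ • U m := by
  intro m hm
  set K : Mat (Fin n) := U m - σ • (U m)ᵀ with hK
  have hKt : Kᵀ = (-σ) • K := by
    rw [hK, Matrix.transpose_sub, Matrix.transpose_smul, Matrix.transpose_transpose]
    rw [neg_smul, smul_sub, smul_sigma_smul hσ]
    abel
  have hipK : ip (U m) K = 0 := hpt_ip_anti hσ hp h K hKt m hm
  have hipK2 : ip K K = 0 := by
    have e1 : ip ((U m)ᵀ) K = ip (U m) Kᵀ := ip_transpose _ _
    have e2 : ip (σ • (U m)ᵀ) K = (starRingEnd ℂ) σ * ip (U m) Kᵀ := by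
      rw [ip_smul_left, e1]
    have e3 : ip (U m) Kᵀ = 0 := by
      rw [hKt, ip_smul_right, hipK, mul_zero]
    calc ip K K = ip (U m) K - ip (σ • (U m)ᵀ) K := by
          rw [hK]
          rw [ip_eq_sum, ip_eq_sum, ip_eq_sum]
          rw [← Finset.sum_sub_distrib]
          congr 1; funext i
          rw [← Finset.sum_sub_distrib]
          congr 1; funext j
          simp only [Matrix.sub_apply, Matrix.smul_apply, map_sub, smul_eq_mul]
          ring
      _ = 0 := by rw [hipK, e2, e3, mul_zero, sub_zero]
  have : K = 0 := ip_self_eq_zero hipK2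
  have h4 : U m = σ • (U m)ᵀ := by
    have := sub_eq_zero.mp (hK ▸ this)
    exact this
  calc (U m)ᵀ = σ • σ • (U m)ᵀ := (smul_sigma_smul hσ _).symm
    _ = σ • U m := by rw [← h4]

end Core

section Core2
variable {n : ℕ} {σ c : ℂ}

lemma conj_sigma (hσ : σ = 1 ∨ σ = -1) : (starRingEnd ℂ) σ = σ := by
  rcases hσ with h | h <;> rw [h] <;> simp

lemma hpt_card {N t : ℕ} (hσ : σ = 1 ∨ σ = -1) (hc : c ≠ 0)
    {D : Fin N → Mat (Fin n)} (hD : LinearIndependent ℂ D)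
    (hDσ : ∀ k, (D k)ᵀ = σ • D k) {q : Fin t → ℝ} {V : Fin t → Mat (Fin n)}
    (h : Hpt σ c q V) : N ≤ t := by
  have hspan := hpt_span hσ hc h
  have h1 : Submodule.span ℂ (Set.range D) ≤ Submodule.span ℂ (Set.range V) := by
    rw [Submodule.span_le]
    rintro x ⟨k, rfl⟩
    exact hspan (D k) (hDσ k)
  have h2 := finrank_span_eq_card hD
  have h3 : Module.finrank ℂ (Submodule.span ℂ (Set.range V)) ≤ t := by
    have := finrank_range_le_card (R := ℂ) V
    simpa [Set.finrank] using this
  calc N = Module.finrank ℂ (Submodule.span ℂ (Set.range D)) := by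
        rw [h2, Fintype.card_fin]
    _ ≤ Module.finrank ℂ (Submodule.span ℂ (Set.range V)) := Submodule.finrank_mono h1
    _ ≤ t := h3

lemma hpt_orth {N : ℕ} {p : Fin N → ℝ} {U : Fin N → Mat (Fin n)}
    (hσ : σ = 1 ∨ σ = -1) (hppos : ∀ m, 0 < p m)
    (h : Hpt σ c p U) (hU : LinearIndependent ℂ U) :
    ∀ j k, j ≠ k → ip (U j) (U k) = 0 := by
  intro j k hjk
  have hsym := hpt_sym hσ (fun m => (hppos m).le) h k (hppos k)
  have h2 := h (U k)
  rw [hsym, smul_sigma_smul hσ] at h2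
  have h1 : ∑ m, ((p m : ℂ) * ip (U m) (U k) - (if m = k then 2 * c else 0)) • U m = 0 := by
    have e1 : ∀ m : Fin N, ((p m : ℂ) * ip (U m) (U k) - (if m = k then 2 * c else 0)) • U m
        = (p m : ℂ) • (ip (U m) (U k) • U m) - (if m = k then (2*c) • U m else 0) := by
      intro m
      rw [sub_smul, smul_smul]
      congr 1
      split_ifs <;> simp
    rw [Finset.sum_congr rfl (fun m _ => e1 m), Finset.sum_sub_distrib, h2,
      Finset.sum_ite_eq' Finset.univ k (fun m => (2*c) • U m), if_pos (Finset.mem_univ k)]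
    rw [sub_eq_zero, two_mul, add_smul, smul_add]
  have h3 := Fintype.linearIndependent_iff.mp hU _ h1 j
  rw [if_neg hjk, sub_zero] at h3
  rcases mul_eq_zero.mp h3 with h4 | h4
  · exact absurd h4 (by exact_mod_cast (hppos j).ne')
  · exact h4

lemma construct_hpt {N : ℕ} (hσ : σ = 1 ∨ σ = -1)
    (hcN : 2 * c * N = n) (hN : N ≠ 0) {U : Fin N → Mat (Fin n)}
    (hUuni : ∀ k, U k ∈ Matrix.unitaryGroup (Fin n) ℂ)
    (hUσ : ∀ k, (U k)ᵀ = σ • U k)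
    (hUorth : ∀ j k, j ≠ k → ip (U j) (U k) = 0)
    (hUspan : ∀ A : Mat (Fin n), Aᵀ = σ • A → A ∈ Submodule.span ℂ (Set.range U)) :
    Hpt σ c (fun _ => (N:ℝ)⁻¹) U := by
  intro A
  set As : Mat (Fin n) := (2:ℂ)⁻¹ • (A + σ • Aᵀ) with hAs
  have hAsσ : Asᵀ = σ • As := by
    rw [hAs, Matrix.transpose_smul, Matrix.transpose_add, Matrix.transpose_smul,
      Matrix.transpose_transpose, smul_comm σ ((2:ℂ)⁻¹)]
    congr 1
    rw [smul_add, smul_smul, sigma_mul_self hσ, one_smul, add_comm]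
  have hips : ∀ m, ip (U m) A = ip (U m) As := by
    intro m
    rw [hAs, ip_smul_right, ip_add_right, ip_smul_right]
    have e1 : ip (U m) Aᵀ = ((starRingEnd ℂ) σ) * ip (U m) A := by
      rw [← ip_transpose, hUσ m, ip_smul_left]
    rw [e1, conj_sigma hσ, ← mul_assoc, sigma_mul_self hσ]
    ring
  obtain ⟨a, ha⟩ := (Submodule.mem_span_range_iff_exists_fun ℂ).mp (hUspan As hAsσ)
  have hipa : ∀ m, ip (U m) As = a m * n := by
    intro m
    rw [← ha, ip_sum_right]
    rw [Finset.sum_eq_single m]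
    · rw [ip_smul_right, ip_unitary_self (hUuni m)]
    · intro b _ hb
      rw [ip_smul_right, hUorth m b (Ne.symm hb), mul_zero]
    · intro hmem
      exact absurd (Finset.mem_univ m) hmem
  calc ∑ m, (((N:ℝ)⁻¹ : ℝ) : ℂ) • (ip (U m) A • U m)
      = ∑ m, ((2 * c) * a m) • U m := by
        refine Finset.sum_congr rfl fun m _ => ?_
        rw [hips m, hipa m, smul_smul]
        congr 1
        have hNC : (N:ℂ) ≠ 0 := Nat.cast_ne_zero.mpr hN
        push_cast
        rw [← hcN]
        field_simp
    _ = (2 * c) • ∑ m, a m • U m := by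
        rw [Finset.smul_sum]
        refine Finset.sum_congr rfl fun m _ => ?_
        rw [smul_smul]
    _ = c • (A + σ • Aᵀ) := by
        rw [ha, hAs, smul_smul]
        congr 1
        field_simp
end Core2

section DimCount
variable {n : ℕ}

lemma std_transpose (i j : Fin n) :
    (Matrix.single i j (1:ℂ))ᵀ = Matrix.single j i 1 := by
  ext a b
  simp only [Matrix.transpose_apply, std_apply]
  exact if_congr and_comm rfl rfl

lemma card_diag :
    (Finset.univ.filter fun p : Fin n × Fin n => p.1 = p.2).card = n := by
  classical
  have e1 : (Finset.univ.filter fun p : Fin n × Fin n => p.1 = p.2).card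
      = (Finset.univ : Finset (Fin n)).card := by
    refine Finset.card_bij (fun (p : Fin n × Fin n) _ => p.1) ?_ ?_ ?_
    · intro p hp; simp
    · intro p hp q hq h
      have h' : p.1 = q.1 := h
      simp only [Finset.mem_filter, Finset.mem_univ, true_and] at hp hq
      apply Prod.ext h'
      rw [← hp, ← hq, h']
    · intro i _
      exact ⟨(i, i), by simp, rfl⟩
  rw [e1, Finset.card_univ, Fintype.card_fin]

-- cardinalities
lemma two_mul_card_le :
    2 * Fintype.card {p : Fin n × Fin n // p.1 ≤ p.2} = n * (n + 1) := by
  classical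
  have hle : Fintype.card {p : Fin n × Fin n // p.1 ≤ p.2}
      = (Finset.univ.filter fun p : Fin n × Fin n => p.1 ≤ p.2).card :=
    Fintype.card_subtype _
  have htot : (Finset.univ.filter fun p : Fin n × Fin n => p.1 ≤ p.2).card
      + (Finset.univ.filter fun p : Fin n × Fin n => ¬ p.1 ≤ p.2).card = n * n := by
    rw [Finset.card_filter_add_card_filter_not]
    simp
  have hswap : (Finset.univ.filter fun p : Fin n × Fin n => ¬ p.1 ≤ p.2).card
      = (Finset.univ.filter fun p : Fin n × Fin n => p.1 < p.2).card := by
    apply Finset.card_bij (fun p _ => p.swap)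
    · intro p hp
      simp only [Finset.mem_filter, Finset.mem_univ, true_and, not_le] at hp ⊢
      exact hp
    · intro p hp q hq h
      exact Prod.swap_injective h
    · intro p hp
      simp only [Finset.mem_filter, Finset.mem_univ, true_and, not_le] at hp
      exact ⟨p.swap, by simpa using hp, by simp⟩
  have hsplit : (Finset.univ.filter fun p : Fin n × Fin n => p.1 ≤ p.2).card
      = (Finset.univ.filter fun p : Fin n × Fin n => p.1 < p.2).card + n := by
    have hcong : (Finset.univ.filter fun p : Fin n × Fin n => p.1 ≤ p.2)
        = (Finset.univ.filter fun p : Fin n × Fin n => p.1 < p.2)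
          ∪ (Finset.univ.filter fun p : Fin n × Fin n => p.1 = p.2) := by
      rw [← Finset.filter_or]
      apply Finset.filter_congr
      intro p _
      simp [le_iff_lt_or_eq]
    rw [hcong, Finset.card_union_of_disjoint, card_diag]
    rw [Finset.disjoint_filter]
    intro p _ hlt
    exact ne_of_lt hlt
  have hx : n * (n + 1) = n * n + n := by ring
  omega

lemma card_le_eq :
    Fintype.card {p : Fin n × Fin n // p.1 ≤ p.2} = n * (n + 1) / 2 := by
  have := two_mul_card_le (n := n)
  omega

lemma two_mul_card_lt :
    2 * Fintype.card {p : Fin n × Fin n // p.1 < p.2} = n * (n - 1) := by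
  classical
  have h1 := two_mul_card_le (n := n)
  have hle : Fintype.card {p : Fin n × Fin n // p.1 ≤ p.2}
      = Fintype.card {p : Fin n × Fin n // p.1 < p.2} + n := by
    rw [Fintype.card_subtype, Fintype.card_subtype]
    have hcong : (Finset.univ.filter fun p : Fin n × Fin n => p.1 ≤ p.2)
        = (Finset.univ.filter fun p : Fin n × Fin n => p.1 < p.2)
          ∪ (Finset.univ.filter fun p : Fin n × Fin n => p.1 = p.2) := by
      rw [← Finset.filter_or]
      apply Finset.filter_congr
      intro p _
      simp [le_iff_lt_or_eq]
    rw [hcong, Finset.card_union_of_disjoint, card_diag]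
    rw [Finset.disjoint_filter]
    intro p _ hlt
    exact ne_of_lt hlt
  have key : n * (n - 1) + 2 * n = n * (n + 1) := by
    cases n with
    | zero => rfl
    | succ k => simp [Nat.succ_sub_one]; ring
  omega

lemma card_lt_eq :
    Fintype.card {p : Fin n × Fin n // p.1 < p.2} = n * (n - 1) / 2 := by
  have := two_mul_card_lt (n := n)
  omega

lemma indep_sym : LinearIndependent ℂ
    (fun q : {p : Fin n × Fin n // p.1 ≤ p.2} =>
      (Matrix.single q.1.1 q.1.2 1 + Matrix.single q.1.2 q.1.1 1 : Mat (Fin n))) := by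
  rw [Fintype.linearIndependent_iff]
  intro g hg q₀
  obtain ⟨⟨a, b⟩, hab⟩ := q₀
  have h := congrFun (congrFun hg a) b
  simp only [Matrix.sum_apply, Matrix.smul_apply, Matrix.add_apply, std_apply,
    Matrix.zero_apply, smul_eq_mul] at h
  rw [Finset.sum_eq_single (⟨(a, b), hab⟩ : {p : Fin n × Fin n // p.1 ≤ p.2})] at h
  · rw [if_pos ⟨rfl, rfl⟩] at h
    by_cases hd : a = b
    · rw [if_pos ⟨hd.symm, hd⟩] at h
      rcases mul_eq_zero.mp h with h' | h'
      · exact h'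
      · exact absurd h' (by norm_num)
    · rw [if_neg (fun hc => hd hc.2)] at h
      simpa using h
  · rintro ⟨⟨x, y⟩, hxy⟩ _ hq
    have hq1 : ¬(x = a ∧ y = b) := by
      rintro ⟨h1, h2⟩
      exact hq (Subtype.ext (Prod.ext h1 h2))
    have hq2 : ¬(y = a ∧ x = b) := by
      rintro ⟨h1, h2⟩
      have hba : b ≤ a := by rw [← h1, ← h2]; exact hxy
      have heq : a = b := le_antisymm hab hba
      exact hq (Subtype.ext (Prod.ext (h2.trans heq.symm) (h1.trans heq)))
    rw [if_neg hq1, if_neg hq2]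
    simp
  · simp

lemma indep_skew : LinearIndependent ℂ
    (fun q : {p : Fin n × Fin n // p.1 < p.2} =>
      (Matrix.single q.1.1 q.1.2 1 - Matrix.single q.1.2 q.1.1 1 : Mat (Fin n))) := by
  rw [Fintype.linearIndependent_iff]
  intro g hg q₀
  obtain ⟨⟨a, b⟩, hab⟩ := q₀
  have h := congrFun (congrFun hg a) b
  simp only [Matrix.sum_apply, Matrix.smul_apply, Matrix.sub_apply, std_apply,
    Matrix.zero_apply, smul_eq_mul] at h
  rw [Finset.sum_eq_single (⟨(a, b), hab⟩ : {p : Fin n × Fin n // p.1 < p.2})] at h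
  · rw [if_pos ⟨rfl, rfl⟩] at h
    rw [if_neg (fun hc : b = a ∧ a = b => absurd hab (by rw [hc.2]; exact lt_irrefl b))] at h
    simpa using h
  · rintro ⟨⟨x, y⟩, hxy⟩ _ hq
    have hq1 : ¬(x = a ∧ y = b) := by
      rintro ⟨h1, h2⟩
      exact hq (Subtype.ext (Prod.ext h1 h2))
    have hq2 : ¬(y = a ∧ x = b) := by
      rintro ⟨h1, h2⟩
      have hba : b < a := by rw [← h1, ← h2]; exact hxy
      exact absurd hab (lt_asymm hba)
    rw [if_neg hq1, if_neg hq2]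
    simp
  · simp

lemma exists_sym_fam (n : ℕ) : ∃ D : Fin (n * (n + 1) / 2) → Mat (Fin n),
    LinearIndependent ℂ D ∧ ∀ k, (D k)ᵀ = (1:ℂ) • D k := by
  let e := Fintype.equivFinOfCardEq (card_le_eq (n := n))
  refine ⟨(fun q : {p : Fin n × Fin n // p.1 ≤ p.2} =>
      (Matrix.single q.1.1 q.1.2 1 + Matrix.single q.1.2 q.1.1 1 : Mat (Fin n))) ∘ e.symm,
    indep_sym.comp e.symm e.symm.injective, fun k => ?_⟩
  rw [one_smul]
  simp only [Function.comp_apply]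
  rw [Matrix.transpose_add, std_transpose, std_transpose, add_comm]

lemma exists_skew_fam (n : ℕ) : ∃ D : Fin (n * (n - 1) / 2) → Mat (Fin n),
    LinearIndependent ℂ D ∧ ∀ k, (D k)ᵀ = (-1:ℂ) • D k := by
  let e := Fintype.equivFinOfCardEq (card_lt_eq (n := n))
  refine ⟨(fun q : {p : Fin n × Fin n // p.1 < p.2} =>
      (Matrix.single q.1.1 q.1.2 1 - Matrix.single q.1.2 q.1.1 1 : Mat (Fin n))) ∘ e.symm,
    indep_skew.comp e.symm e.symm.injective, fun k => ?_⟩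
  rw [neg_one_smul]
  simp only [Function.comp_apply]
  rw [Matrix.transpose_sub, std_transpose, std_transpose, neg_sub]

end DimCount

section Main
variable {n : ℕ} {σ c : ℂ}

lemma drop_zero {Φ : Mat (Fin n) →ₗ[ℂ] Mat (Fin n)} {N : ℕ} {p : Fin (N+1) → ℝ}
    {U : Fin (N+1) → Mat (Fin n)} (h : IsMixedUnitaryDecomp Φ p U) {k : Fin (N+1)}
    (hk : p k = 0) :
    ∃ (q : Fin N → ℝ) (V : Fin N → Mat (Fin n)), IsMixedUnitaryDecomp Φ q V := by
  obtain ⟨h1, h2, h3, h4⟩ := h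
  refine ⟨p ∘ k.succAbove, U ∘ k.succAbove, fun m => h1 _, ?_, fun m => h3 _, ?_⟩
  · rw [Fin.sum_univ_succAbove p k, hk, zero_add] at h2
    exact h2
  · intro X
    rw [h4 X, Fin.sum_univ_succAbove
      (fun m => (p m : ℂ) • (U m * X * (U m)ᴴ)) k, hk]
    simp

lemma decomp_to_hpt {Φ : Mat (Fin n) →ₗ[ℂ] Mat (Fin n)}
    (hΦ : ∀ X, Φ X = c • (X.trace • (1 : Mat (Fin n)) + σ • Xᵀ))
    {t : ℕ} {p : Fin t → ℝ} {U : Fin t → Mat (Fin n)}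
    (h : IsMixedUnitaryDecomp Φ p U) : Hpt σ c p U := by
  refine (bridge2 σ c p U).mpr ((bridge1 σ c p U).mp fun X => ?_)
  rw [← h.2.2.2 X, hΦ X]

lemma main_iff {N : ℕ} (hσ : σ = 1 ∨ σ = -1) (hc : c ≠ 0)
    (hcN : 2 * c * N = n) (hn : 0 < n)
    (D : Fin N → Mat (Fin n)) (hD : LinearIndependent ℂ D)
    (hDσ : ∀ k, (D k)ᵀ = σ • D k)
    (Φ : Mat (Fin n) →ₗ[ℂ] Mat (Fin n))
    (hΦ : ∀ X, Φ X = c • (X.trace • (1 : Mat (Fin n)) + σ • Xᵀ)) :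
    (IsMixedUnitary Φ ∧ mixedUnitaryRank Φ = N) ↔
      ∃ U : Fin N → Mat (Fin n),
        (∀ k, U k ∈ Matrix.unitaryGroup (Fin n) ℂ) ∧
        (∀ k, (U k)ᵀ = σ • U k) ∧
        (∀ j k, j ≠ k → ((U j)ᴴ * U k).trace = 0) ∧
        (∀ A : Mat (Fin n), Aᵀ = σ • A → A ∈ Submodule.span ℂ (Set.range U)) := by
  have hN0 : N ≠ 0 := by
    intro h0
    rw [h0] at hcN
    simp at hcN
    exact hn.ne' (by exact_mod_cast hcN.symm)
  constructor
  · rintro ⟨hmu, hrank⟩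
    have hne : {t : ℕ | ∃ (q : Fin t → ℝ) (V : Fin t → Mat (Fin n)),
        IsMixedUnitaryDecomp Φ q V}.Nonempty := by
      obtain ⟨t, q, V, hd⟩ := hmu
      exact ⟨t, q, V, hd⟩
    have hmem := Nat.sInf_mem hne
    rw [show sInf {t : ℕ | ∃ (q : Fin t → ℝ) (V : Fin t → Mat (Fin n)),
        IsMixedUnitaryDecomp Φ q V} = mixedUnitaryRank Φ from rfl, hrank] at hmem
    obtain ⟨p, U, hdec⟩ := hmem
    have hHpt : Hpt σ c p U := decomp_to_hpt hΦ hdec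
    -- all weights positive
    have hppos : ∀ m, 0 < p m := by
      intro m
      rcases lt_or_eq_of_le (hdec.1 m) with h | h
      · exact h
      · exfalso
        obtain ⟨N', rfl⟩ := Nat.exists_eq_succ_of_ne_zero hN0
        obtain ⟨q, V, hd'⟩ := drop_zero hdec h.symm
        have hH' : Hpt σ c q V := decomp_to_hpt hΦ hd'
        have := hpt_card hσ hc hD hDσ hH'
        omega
    have hsym : ∀ k, (U k)ᵀ = σ • U k :=
      fun k => hpt_sym hσ hdec.1 hHpt k (hppos k)
    have hspan := hpt_span hσ hc hHpt
    have hind : LinearIndependent ℂ U := by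
      rw [linearIndependent_iff_card_eq_finrank_span]
      have hle : Set.finrank ℂ (Set.range U) ≤ N := by
        simpa using finrank_range_le_card (R := ℂ) U
      have hge : N ≤ Set.finrank ℂ (Set.range U) := by
        have h1 : Submodule.span ℂ (Set.range D) ≤ Submodule.span ℂ (Set.range U) := by
          rw [Submodule.span_le]
          rintro x ⟨j, rfl⟩
          exact hspan (D j) (hDσ j)
        calc N = Module.finrank ℂ (Submodule.span ℂ (Set.range D)) := by
              rw [finrank_span_eq_card hD, Fintype.card_fin]
          _ ≤ Module.finrank ℂ (Submodule.span ℂ (Set.range U)) :=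
              Submodule.finrank_mono h1
          _ = Set.finrank ℂ (Set.range U) := rfl
      rw [Fintype.card_fin]
      omega
    exact ⟨U, hdec.2.2.1, hsym, hpt_orth hσ hppos hHpt hind, hspan⟩
  · rintro ⟨U, hUuni, hUσ, hUorth, hUspan⟩
    have hHpt : Hpt σ c (fun _ => (N:ℝ)⁻¹) U :=
      construct_hpt hσ hcN hN0 hUuni hUσ hUorth hUspan
    have hdec : IsMixedUnitaryDecomp Φ (fun _ => (N:ℝ)⁻¹) U := by
      refine ⟨fun k => by positivity, ?_, hUuni, ?_⟩
      · rw [Finset.sum_const, Finset.card_univ, Fintype.card_fin, nsmul_eq_mul]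
        rw [mul_inv_cancel₀ (by exact_mod_cast hN0)]
      · intro X
        rw [hΦ X]
        exact ((bridge1 σ c _ U).mpr ((bridge2 σ c _ U).mp hHpt) X).symm
    have hmu : IsMixedUnitary Φ := ⟨N, _, _, hdec⟩
    refine ⟨hmu, le_antisymm (Nat.sInf_le ⟨_, _, hdec⟩) ?_⟩
    have hne : {t : ℕ | ∃ (q : Fin t → ℝ) (V : Fin t → Mat (Fin n)),
        IsMixedUnitaryDecomp Φ q V}.Nonempty := ⟨N, _, _, hdec⟩
    obtain ⟨q, V, hd'⟩ := Nat.sInf_mem hne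
    exact hpt_card hσ hc hD hDσ (decomp_to_hpt hΦ hd')
end Main

end Stmt15Aux

open Stmt15Aux in
/-- Theorem 8 of the paper. (1) The symmetric Werner--Holevo channel
`Φ₀` on `M_n` has mixed-unitary rank `n(n+1)/2` iff there is an orthogonal basis of the
symmetric matrices consisting of unitaries; (2) for even `n`, the anti-symmetric
Werner--Holevo channel `Φ₁` has mixed-unitary rank `n(n-1)/2` iff there is an orthogonal
basis of the skew-symmetric matrices consisting of unitaries. -/
theorem stmt15 (n : ℕ) (hn : 0 < n)
    (Φ₀ Φ₁ : Mat (Fin n) →ₗ[ℂ] Mat (Fin n))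
    (hΦ₀ : ∀ X, Φ₀ X = ((n : ℂ) + 1)⁻¹ • (X.trace • (1 : Mat (Fin n)) + Xᵀ))
    (hΦ₁ : ∀ X, Φ₁ X = ((n : ℂ) - 1)⁻¹ • (X.trace • (1 : Mat (Fin n)) - Xᵀ)) :
    ((IsMixedUnitary Φ₀ ∧ mixedUnitaryRank Φ₀ = n * (n + 1) / 2) ↔
      ∃ U : Fin (n * (n + 1) / 2) → Mat (Fin n),
        (∀ k, U k ∈ Matrix.unitaryGroup (Fin n) ℂ) ∧
        (∀ k, (U k)ᵀ = U k) ∧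
        (∀ j k, j ≠ k → ((U j)ᴴ * U k).trace = 0) ∧
        (∀ A : Mat (Fin n), Aᵀ = A → A ∈ Submodule.span ℂ (Set.range U))) ∧
    (Even n →
      ((IsMixedUnitary Φ₁ ∧ mixedUnitaryRank Φ₁ = n * (n - 1) / 2) ↔
        ∃ U : Fin (n * (n - 1) / 2) → Mat (Fin n),
          (∀ k, U k ∈ Matrix.unitaryGroup (Fin n) ℂ) ∧
          (∀ k, (U k)ᵀ = -(U k)) ∧
          (∀ j k, j ≠ k → ((U j)ᴴ * U k).trace = 0) ∧
          (∀ A : Mat (Fin n), Aᵀ = -A → A ∈ Submodule.span ℂ (Set.range U)))) := by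
  constructor
  · -- symmetric part
    obtain ⟨D, hD, hDσ⟩ := exists_sym_fam n
    have hne : ((n:ℂ) + 1) ≠ 0 := by
      have : ((n:ℂ) + 1) = ((n + 1 : ℕ) : ℂ) := by push_cast; ring
      rw [this]
      exact_mod_cast Nat.succ_ne_zero n
    have hc : ((n:ℂ) + 1)⁻¹ ≠ 0 := inv_ne_zero hne
    have hcN : 2 * ((n:ℂ) + 1)⁻¹ * ((n * (n + 1) / 2 : ℕ) : ℂ) = (n : ℂ) := by
      have h1 : (n * (n + 1) / 2) * 2 = n * (n + 1) :=
        Nat.div_mul_cancel (even_iff_two_dvd.mp (Nat.even_mul_succ_self n))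
      have h2 : ((n * (n + 1) / 2 : ℕ) : ℂ) * 2 = (n : ℂ) * ((n : ℂ) + 1) := by
        exact_mod_cast congrArg (fun m : ℕ => (m : ℂ)) h1
      calc 2 * ((n:ℂ) + 1)⁻¹ * ((n * (n + 1) / 2 : ℕ) : ℂ)
          = (((n * (n + 1) / 2 : ℕ) : ℂ) * 2) * ((n:ℂ) + 1)⁻¹ := by ring
        _ = ((n : ℂ) * ((n : ℂ) + 1)) * ((n:ℂ) + 1)⁻¹ := by rw [h2]
        _ = (n : ℂ) := by
            rw [mul_assoc, mul_inv_cancel₀ hne, mul_one]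
    have hΦ : ∀ X : Mat (Fin n), Φ₀ X
        = ((n:ℂ) + 1)⁻¹ • (X.trace • (1 : Mat (Fin n)) + (1:ℂ) • Xᵀ) := by
      intro X
      rw [hΦ₀ X, one_smul]
    simpa only [one_smul] using
      main_iff (Or.inl rfl) hc hcN hn D hD hDσ Φ₀ hΦ
  · -- antisymmetric part
    intro hev
    have hn2 : 2 ≤ n := by
      rcases hev with ⟨k, hk⟩
      omega
    obtain ⟨D, hD, hDσ⟩ := exists_skew_fam n
    have hne : ((n:ℂ) - 1) ≠ 0 := by
      rw [sub_ne_zero]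
      exact_mod_cast (by omega : n ≠ 1)
    have hc : ((n:ℂ) - 1)⁻¹ ≠ 0 := inv_ne_zero hne
    have hcN : 2 * ((n:ℂ) - 1)⁻¹ * ((n * (n - 1) / 2 : ℕ) : ℂ) = (n : ℂ) := by
      have h1 : (n * (n - 1) / 2) * 2 = n * (n - 1) :=
        Nat.div_mul_cancel (even_iff_two_dvd.mp (hev.mul_right _))
      have h2 : ((n * (n - 1) / 2 : ℕ) : ℂ) * 2 = (n : ℂ) * ((n : ℂ) - 1) := by
        have h3 := congrArg (fun m : ℕ => (m : ℂ)) h1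
        push_cast [Nat.cast_sub (by omega : 1 ≤ n)] at h3
        exact h3
      calc 2 * ((n:ℂ) - 1)⁻¹ * ((n * (n - 1) / 2 : ℕ) : ℂ)
          = (((n * (n - 1) / 2 : ℕ) : ℂ) * 2) * ((n:ℂ) - 1)⁻¹ := by ring
        _ = ((n : ℂ) * ((n : ℂ) - 1)) * ((n:ℂ) - 1)⁻¹ := by rw [h2]
        _ = (n : ℂ) := by
            rw [mul_assoc, mul_inv_cancel₀ hne, mul_one]
    have hΦ : ∀ X : Mat (Fin n), Φ₁ X
        = ((n:ℂ) - 1)⁻¹ • (X.trace • (1 : Mat (Fin n)) + (-1:ℂ) • Xᵀ) := by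
      intro X
      rw [hΦ₁ X, neg_one_smul, ← sub_eq_add_neg]
    simpa only [neg_one_smul] using
      main_iff (Or.inr rfl) hc hcN hn D hD hDσ Φ₁ hΦ
end

section
/- Let n be a positive integer and let Φ : M_n → M_n be a quantum channel. Then the following are equivalent: (1) Φ is unitarily equivalent to a Schur channel, i.e., there exist unitary matrices U, V ∈ M_n and a correlation matrix C ∈ M_n such that U Φ(V X V*) U* = C ⊙ X for all X ∈ M_n; (2) the operator system S_Φ of Φ is a commuting family of matrices (every pair of elements of S_Φ commutes). -/
open scoped Kronecker ComplexOrder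
open Matrix

section AuxStmt19
open scoped ComplexConjugate ComplexOrder
open Matrix
variable {n : ℕ}


noncomputable def vecL (n : ℕ) : Mat (Fin n) →ₗ[ℂ] EuclideanSpace ℂ (Fin n × Fin n) where
  toFun M := (WithLp.equiv 2 _).symm (fun p => M p.1 p.2)
  map_add' := fun _ _ => rfl
  map_smul' := fun _ _ => rfl

lemma vecL_apply (M : Mat (Fin n)) (p : Fin n × Fin n) : vecL n M p = M p.1 p.2 := rfl

lemma vecL_inj : Function.Injective (vecL (n := n)) := by
  intro M N h
  ext i j
  exact congrFun congr(WithLp.equiv 2 _ $h) (i, j)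

lemma inner_vecL (z : EuclideanSpace ℂ (Fin n × Fin n)) (M : Mat (Fin n)) :
    (inner ℂ z (vecL n M) : ℂ) = ∑ p : Fin n × Fin n, conj (z p) * M p.1 p.2 := by
  simp [PiLp.inner_apply, vecL_apply, RCLike.inner_apply, mul_comm]

lemma entry_mul_std (F : Mat (Fin n)) (a b i l : Fin n) :
    (F * single a b (1:ℂ) * Fᴴ) i l = F i a * conj (F l b) := by
  rw [mul_apply]
  simp only [conjTranspose_apply, mul_apply, single, of_apply]
  have h1 : ∀ x : Fin n, (∑ y : Fin n, F i y * if a = y ∧ b = x then (1:ℂ) else 0)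
      = F i a * if b = x then 1 else 0 := by
    intro x
    rw [Finset.sum_eq_single a]
    · simp
    · intro y _ hy
      simp [Ne.symm hy]
    · intro h; exact absurd (Finset.mem_univ a) h
  rw [Finset.sum_congr rfl fun x _ => by rw [h1 x]]
  rw [Finset.sum_eq_single b]
  · simp [Complex.star_def, mul_comm]
  · intro y _ hy
    simp [Ne.symm hy]
  · intro h; exact absurd (Finset.mem_univ b) h

lemma choi_contract {r : ℕ} (F : Fin r → Mat (Fin n)) (z : EuclideanSpace ℂ (Fin n × Fin n)) :
    ∑ p : Fin n × Fin n, ∑ q : Fin n × Fin n, conj (z p) * z q *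
        (∑ j, F j * single p.2 q.2 (1:ℂ) * (F j)ᴴ) p.1 q.1
      = ∑ j, (inner ℂ z (vecL n (F j)) : ℂ) * conj (inner ℂ z (vecL n (F j)) : ℂ) := by
  have h : ∀ p q : Fin n × Fin n,
      conj (z p) * z q * (∑ j, F j * single p.2 q.2 (1:ℂ) * (F j)ᴴ) p.1 q.1
      = ∑ j, (conj (z p) * F j p.1 p.2) * (z q * conj (F j q.1 q.2)) := by
    intro p q
    rw [Matrix.sum_apply]
    rw [Finset.mul_sum]
    refine Finset.sum_congr rfl fun j _ => ?_
    rw [entry_mul_std]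
    ring
  calc ∑ p : Fin n × Fin n, ∑ q : Fin n × Fin n, conj (z p) * z q *
        (∑ j, F j * single p.2 q.2 (1:ℂ) * (F j)ᴴ) p.1 q.1
      = ∑ p : Fin n × Fin n, ∑ q : Fin n × Fin n, ∑ j,
          (conj (z p) * F j p.1 p.2) * (z q * conj (F j q.1 q.2)) := by
        exact Finset.sum_congr rfl fun p _ => Finset.sum_congr rfl fun q _ => h p q
    _ = ∑ p : Fin n × Fin n, ∑ j, ∑ q : Fin n × Fin n,
          (conj (z p) * F j p.1 p.2) * (z q * conj (F j q.1 q.2)) :=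
        Finset.sum_congr rfl fun p _ => Finset.sum_comm
    _ = ∑ j, ∑ p : Fin n × Fin n, ∑ q : Fin n × Fin n,
          (conj (z p) * F j p.1 p.2) * (z q * conj (F j q.1 q.2)) :=
        Finset.sum_comm
    _ = ∑ j, (∑ p : Fin n × Fin n, conj (z p) * F j p.1 p.2) *
          (∑ q : Fin n × Fin n, z q * conj (F j q.1 q.2)) :=
        Finset.sum_congr rfl fun j _ => (Finset.sum_mul_sum _ _ _ _).symm
    _ = _ := by
        refine Finset.sum_congr rfl fun j _ => ?_
        rw [inner_vecL]
        congr 1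
        rw [map_sum]
        refine Finset.sum_congr rfl fun p _ => ?_
        simp [mul_comm]

lemma kraus_mem_span {r s : ℕ} (A : Fin r → Mat (Fin n)) (B : Fin s → Mat (Fin n))
    (h : ∀ X, ∑ j, A j * X * (A j)ᴴ = ∑ k, B k * X * (B k)ᴴ) (j : Fin r) :
    A j ∈ Submodule.span ℂ (Set.range B) := by
  set K : Submodule ℂ (EuclideanSpace ℂ (Fin n × Fin n)) :=
    Submodule.span ℂ (Set.range (fun k => vecL n (B k))) with hK
  have hmem : vecL n (A j) ∈ K := by
    rw [← Submodule.orthogonal_orthogonal K]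
    rw [Submodule.mem_orthogonal]
    intro z hz
    -- hz : z ∈ Kᗮ
    have hzB : ∀ k, (inner ℂ z (vecL n (B k)) : ℂ) = 0 := by
      intro k
      have : (inner ℂ (vecL n (B k)) z : ℂ) = 0 :=
        (Submodule.mem_orthogonal K z).mp hz _ (Submodule.subset_span ⟨k, rfl⟩)
      rwa [inner_eq_zero_symm] at this
    have hsum : ∑ i, (inner ℂ z (vecL n (A i)) : ℂ) * conj (inner ℂ z (vecL n (A i)) : ℂ) = 0 := by
      rw [← choi_contract A z]
      have : ∀ p q : Fin n × Fin n,
          (∑ i, A i * single p.2 q.2 (1:ℂ) * (A i)ᴴ)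
          = ∑ k, B k * single p.2 q.2 (1:ℂ) * (B k)ᴴ := fun p q => h _
      calc ∑ p : Fin n × Fin n, ∑ q : Fin n × Fin n, conj (z p) * z q *
            (∑ i, A i * single p.2 q.2 (1:ℂ) * (A i)ᴴ) p.1 q.1
          = ∑ p : Fin n × Fin n, ∑ q : Fin n × Fin n, conj (z p) * z q *
            (∑ k, B k * single p.2 q.2 (1:ℂ) * (B k)ᴴ) p.1 q.1 := by
            exact Finset.sum_congr rfl fun p _ => Finset.sum_congr rfl fun q _ => by
              rw [this p q]
        _ = 0 := by
            rw [choi_contract B z]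
            exact Finset.sum_eq_zero fun k _ => by rw [hzB k, zero_mul]
    -- each term is |·|² ≥ 0
    have hterm : ∀ i : Fin r, (inner ℂ z (vecL n (A i)) : ℂ) = 0 := by
      have h2 : ∑ i, ((Complex.normSq (inner ℂ z (vecL n (A i)) : ℂ) : ℝ) : ℂ) = 0 := by
        rw [← hsum]
        exact Finset.sum_congr rfl fun i _ => (Complex.mul_conj _).symm
      have h3 : ∑ i, Complex.normSq (inner ℂ z (vecL n (A i)) : ℂ) = 0 := by
        have := congrArg Complex.re h2
        simpa [Complex.ofReal_sum] using this
      intro i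
      have h4 : Complex.normSq (inner ℂ z (vecL n (A i)) : ℂ) = 0 := by
        have := (Finset.sum_eq_zero_iff_of_nonneg
          (fun i _ => Complex.normSq_nonneg _)).mp h3 i (Finset.mem_univ i)
        exact this
      exact Complex.normSq_eq_zero.mp h4
    exact hterm j
  -- transfer back
  have himg : K = Submodule.map (vecL n) (Submodule.span ℂ (Set.range B)) := by
    rw [← Submodule.span_image]
    congr 1
    rw [← Set.range_comp]
    rfl
  rw [himg] at hmem
  obtain ⟨M, hM, hMe⟩ := hmem
  rwa [← vecL_inj hMe]



lemma aux_commute_span (s : Set (Mat (Fin n)))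
    (hs : ∀ x ∈ s, ∀ y ∈ s, Commute x y) :
    ∀ x ∈ Submodule.span ℂ s, ∀ y ∈ Submodule.span ℂ s, Commute x y := by
  have key : ∀ y ∈ Submodule.span ℂ s, ∀ x ∈ s, Commute x y := by
    intro y hy
    induction hy using Submodule.span_induction with
    | mem z hz => intro x hx; exact hs x hx z hz
    | zero => intro x hx; exact Commute.zero_right x
    | add y z _ _ hy hz => intro x hx; exact (hy x hx).add_right (hz x hx)
    | smul c y _ hy => intro x hx; exact (hy x hx).smul_right c
  intro x hx y hy
  induction hx using Submodule.span_induction with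
  | mem z hz => exact key y hy z hz
  | zero => exact Commute.zero_left y
  | add a b _ _ ha hb => exact ha.add_left hb
  | smul c a _ ha => exact ha.smul_left c

lemma aux_mem_span_pair {t : Set (Mat (Fin n))} {x y : Mat (Fin n)}
    (hx : x ∈ Submodule.span ℂ t) (hy : y ∈ Submodule.span ℂ t) :
    xᴴ * y ∈ Submodule.span ℂ {M : Mat (Fin n) | ∃ a ∈ t, ∃ b ∈ t, M = aᴴ * b} := by
  set s : Set (Mat (Fin n)) := {M : Mat (Fin n) | ∃ a ∈ t, ∃ b ∈ t, M = aᴴ * b}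
  have key : ∀ y ∈ Submodule.span ℂ t, ∀ a ∈ t, aᴴ * y ∈ Submodule.span ℂ s := by
    intro y hy
    induction hy using Submodule.span_induction with
    | mem z hz => intro a ha; exact Submodule.subset_span ⟨a, ha, z, hz, rfl⟩
    | zero => intro a ha; rw [mul_zero]; exact zero_mem _
    | add y z _ _ hy hz => intro a ha; rw [mul_add]; exact add_mem (hy a ha) (hz a ha)
    | smul c y _ hy => intro a ha; rw [mul_smul_comm]; exact Submodule.smul_mem _ _ (hy a ha)
  induction hx using Submodule.span_induction with
  | mem z hz => exact key y hy z hz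
  | zero => rw [conjTranspose_zero, zero_mul]; exact zero_mem _
  | add a b _ _ ha hb => rw [conjTranspose_add, add_mul]; exact add_mem ha hb
  | smul c a _ ha =>
      rw [conjTranspose_smul, smul_mul_assoc]
      exact Submodule.smul_mem _ _ ha


lemma mp_dir {n : ℕ} (Φ : Mat (Fin n) →ₗ[ℂ] Mat (Fin n))
    (W V : Mat (Fin n)) (hW : W ∈ Matrix.unitaryGroup (Fin n) ℂ)
    (hV : V ∈ Matrix.unitaryGroup (Fin n) ℂ)
    (C : Mat (Fin n)) (hCpsd : C.PosSemidef)
    (hSchur : ∀ X, W * Φ (V * X * Vᴴ) * Wᴴ = Matrix.hadamard C X)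
    {r : ℕ} (A : Fin r → Mat (Fin n)) (hA1 : ∀ X, Φ X = ∑ k, A k * X * (A k)ᴴ)
    (j k j' k' : Fin r) :
    Commute ((A j)ᴴ * A k) ((A j')ᴴ * A k') := by
  classical
  obtain ⟨L, hL⟩ := (show ∃ L : Mat (Fin n), C = Lᴴ * L by open scoped MatrixOrder in simpa [star_eq_conjTranspose] using CStarAlgebra.nonneg_iff_eq_star_mul_self.mp hCpsd.nonneg)
  set D : Fin n → Mat (Fin n) := fun p => Matrix.diagonal (fun i => conj (L p i)) with hD
  set B : Fin n → Mat (Fin n) := fun p => Wᴴ * D p * Vᴴ with hB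
  have hV1 : V * Vᴴ = 1 := by
    have := (Matrix.mem_unitaryGroup_iff).mp hV
    rwa [Matrix.star_eq_conjTranspose] at this
  have hV2 : Vᴴ * V = 1 := mul_eq_one_comm.mp hV1
  have hW1 : W * Wᴴ = 1 := by
    have := (Matrix.mem_unitaryGroup_iff).mp hW
    rwa [Matrix.star_eq_conjTranspose] at this
  have hW2 : Wᴴ * W = 1 := mul_eq_one_comm.mp hW1
  have hHad : ∀ X : Mat (Fin n), Matrix.hadamard C X = ∑ p, D p * X * (D p)ᴴ := by
    intro X
    ext i l
    rw [Matrix.sum_apply, Matrix.hadamard_apply, hL, Matrix.mul_apply]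
    rw [Finset.sum_mul]
    refine Finset.sum_congr rfl fun p _ => ?_
    rw [hD]
    simp only [Matrix.diagonal_conjTranspose, Matrix.diagonal_mul, Matrix.mul_diagonal,
      Matrix.conjTranspose_apply, Pi.star_apply]
    simp [Complex.star_def]
    ring
  have hKrausB : ∀ X, Φ X = ∑ p, B p * X * (B p)ᴴ := by
    intro X
    have h0 := hSchur (Vᴴ * X * V)
    have h1 : V * (Vᴴ * X * V) * Vᴴ = X := by
      calc V * (Vᴴ * X * V) * Vᴴ = (V * Vᴴ) * X * (V * Vᴴ) := by
            simp only [Matrix.mul_assoc]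
        _ = X := by rw [hV1, one_mul, mul_one]
    rw [h1, hHad] at h0
    have h2 : Φ X = Wᴴ * (W * Φ X * Wᴴ) * W := by
      calc Φ X = (Wᴴ * W) * Φ X * (Wᴴ * W) := by rw [hW2, one_mul, mul_one]
        _ = Wᴴ * (W * Φ X * Wᴴ) * W := by simp only [Matrix.mul_assoc]
    rw [h2, h0, Finset.mul_sum, Finset.sum_mul]
    refine Finset.sum_congr rfl fun p _ => ?_
    rw [hB]
    simp only [Matrix.conjTranspose_mul, Matrix.conjTranspose_conjTranspose]
    simp only [Matrix.mul_assoc]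
  have hspan : ∀ i, A i ∈ Submodule.span ℂ (Set.range B) :=
    kraus_mem_span A B (fun X => by rw [← hA1 X, hKrausB X])
  set s2 : Set (Mat (Fin n)) :=
    {M | ∃ a ∈ Set.range B, ∃ b ∈ Set.range B, M = aᴴ * b} with hs2
  have hBpq : ∀ p q, (B p)ᴴ * B q
      = V * Matrix.diagonal (fun i => L p i * conj (L q i)) * Vᴴ := by
    intro p q
    have hDp : (D p)ᴴ = Matrix.diagonal (fun i => L p i) := by
      rw [hD]
      simp [Matrix.diagonal_conjTranspose, Function.comp, Complex.star_def]
    rw [hB]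
    simp only [Matrix.conjTranspose_mul, Matrix.conjTranspose_conjTranspose, hDp]
    simp only [Matrix.mul_assoc]
    rw [show W * (Wᴴ * (D q * Vᴴ)) = D q * Vᴴ from by rw [← Matrix.mul_assoc, hW1, one_mul]]
    simp only [hD, ← Matrix.diagonal_mul_diagonal, Matrix.mul_assoc]
  have hs2comm : ∀ x ∈ s2, ∀ y ∈ s2, Commute x y := by
    rintro x ⟨_, ⟨p, rfl⟩, _, ⟨q, rfl⟩, rfl⟩ y ⟨_, ⟨p', rfl⟩, _, ⟨q', rfl⟩, rfl⟩
    have key : ∀ (d e : Fin n → ℂ),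
        (V * Matrix.diagonal d * Vᴴ) * (V * Matrix.diagonal e * Vᴴ)
        = V * Matrix.diagonal (fun i => d i * e i) * Vᴴ := by
      intro d e
      calc (V * Matrix.diagonal d * Vᴴ) * (V * Matrix.diagonal e * Vᴴ)
          = V * (Matrix.diagonal d * ((Vᴴ * V) * Matrix.diagonal e)) * Vᴴ := by
            simp only [Matrix.mul_assoc]
        _ = V * (Matrix.diagonal d * Matrix.diagonal e) * Vᴴ := by rw [hV2, one_mul]
        _ = _ := by rw [Matrix.diagonal_mul_diagonal]
    show _ * _ = _ * _
    have hfun : (fun i => L p i * conj (L q i) * (L p' i * conj (L q' i)))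
        = fun i => L p' i * conj (L q' i) * (L p i * conj (L q i)) := by
      funext i; ring
    rw [hBpq p q, hBpq p' q', key, key, hfun]
  exact aux_commute_span s2 hs2comm _ (aux_mem_span_pair (hspan j) (hspan k))
    _ (aux_mem_span_pair (hspan j') (hspan k'))



set_option maxHeartbeats 1000000 in
lemma joint_diag {r : ℕ} (A : Fin r → Mat (Fin n))
    (hcomm : ∀ j k j' k', Commute ((A j)ᴴ * A k) ((A j')ᴴ * A k')) :
    ∃ V : Mat (Fin n), Vᴴ * V = 1 ∧
      ∀ j k, ∃ d : Fin n → ℂ, (A j)ᴴ * A k * V = V * Matrix.diagonal d := by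
  classical
  set G : Fin r → Fin r → Mat (Fin n) := fun j k => (A j)ᴴ * A k with hG
  have hGH : ∀ j k, (G j k)ᴴ = G k j := by
    intro j k; simp [hG, conjTranspose_mul]
  set H : (Fin r × Fin r) × Bool → Mat (Fin n) := fun i =>
    if i.2 then G i.1.1 i.1.2 + G i.1.2 i.1.1
    else Complex.I • (G i.1.1 i.1.2 - G i.1.2 i.1.1) with hH
  have hHerm : ∀ i, (H i).IsHermitian := by
    rintro ⟨⟨j, k⟩, b⟩
    cases b <;> simp only [hH, if_true, if_false, Bool.false_eq_true, IsHermitian]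
    · rw [conjTranspose_smul, conjTranspose_sub, hGH, hGH]
      rw [Complex.star_def, Complex.conj_I, neg_smul, ← smul_neg, neg_sub]
    · rw [conjTranspose_add, hGH, hGH, add_comm]
  have hGcomm : ∀ j k j' k', Commute (G j k) (G j' k') := hcomm
  have c1 : ∀ j k j' k', Commute (G j k + G k j) (G j' k' + G k' j') := fun a b c d =>
    ((hGcomm a b c d).add_right (hGcomm a b d c)).add_left
      ((hGcomm b a c d).add_right (hGcomm b a d c))
  have c2 : ∀ j k j' k', Commute (G j k - G k j) (G j' k' - G k' j') := fun a b c d =>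
    ((hGcomm a b c d).sub_right (hGcomm a b d c)).sub_left
      ((hGcomm b a c d).sub_right (hGcomm b a d c))
  have c3 : ∀ j k j' k', Commute (G j k + G k j) (G j' k' - G k' j') := fun a b c d =>
    ((hGcomm a b c d).sub_right (hGcomm a b d c)).add_left
      ((hGcomm b a c d).sub_right (hGcomm b a d c))
  have c4 : ∀ j k j' k', Commute (G j k - G k j) (G j' k' + G k' j') := fun a b c d =>
    ((hGcomm a b c d).add_right (hGcomm a b d c)).sub_left
      ((hGcomm b a c d).add_right (hGcomm b a d c))
  have hHcomm : ∀ i i', Commute (H i) (H i') := by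
    rintro ⟨⟨j, k⟩, b⟩ ⟨⟨j', k'⟩, b'⟩
    cases b <;> cases b' <;> simp only [hH, if_true, if_false, Bool.false_eq_true]
    · exact Commute.smul_left (Commute.smul_right (c2 j k j' k') _) _
    · exact Commute.smul_left (c4 j k j' k') _
    · exact Commute.smul_right (c3 j k j' k') _
    · exact c1 j k j' k'
  set T : (Fin r × Fin r) × Bool → Module.End ℂ (EuclideanSpace ℂ (Fin n)) :=
    fun i => Matrix.toEuclideanLin (H i) with hT
  have hTsym : ∀ i, (T i).IsSymmetric := fun i =>
    (Matrix.isHermitian_iff_isSymmetric).mp (hHerm i)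
  have hmulT : ∀ M N : Mat (Fin n),
      Matrix.toEuclideanLin M ∘ₗ Matrix.toEuclideanLin N = Matrix.toEuclideanLin (M * N) := by
    intro M N
    ext x
    simp [Matrix.toEuclideanLin_apply, Matrix.mulVec_mulVec]
  have hTcomm : Pairwise (Function.onFun Commute T) := by
    intro i i' _
    show T i * T i' = T i' * T i
    rw [Module.End.mul_eq_comp, Module.End.mul_eq_comp]
    show Matrix.toEuclideanLin (H i) ∘ₗ Matrix.toEuclideanLin (H i')
        = Matrix.toEuclideanLin (H i') ∘ₗ Matrix.toEuclideanLin (H i)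
    rw [hmulT, hmulT, hHcomm i i']
  set Vsp : ((Fin r × Fin r) × Bool → ℂ) → Submodule ℂ (EuclideanSpace ℂ (Fin n)) :=
    fun χ => ⨅ i, Module.End.eigenspace (T i) (χ i) with hVsp
  have htop : ⨆ χ, Vsp χ = ⊤ :=
    LinearMap.IsSymmetric.iSup_iInf_eq_top_of_commute hTsym hTcomm
  have hOrth := LinearMap.IsSymmetric.orthogonalFamily_iInf_eigenspaces hTsym
  obtain ⟨S, hS⟩ : ∃ S : Finset ((Fin r × Fin r) × Bool → ℂ), (⨆ χ ∈ S, Vsp χ) = ⊤ := by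
    have hx : ∀ x : EuclideanSpace ℂ (Fin n), ∃ s : Finset _, x ∈ ⨆ χ ∈ s, Vsp χ := by
      intro x
      have hx : x ∈ ⨆ χ, Vsp χ := by rw [htop]; trivial
      exact Submodule.mem_iSup_iff_exists_finset.mp hx
    choose s hs using hx
    set bas := Module.finBasis ℂ (EuclideanSpace ℂ (Fin n))
    refine ⟨Finset.univ.biUnion (fun i => s (bas i)), ?_⟩
    refine le_antisymm le_top ?_
    rw [← bas.span_eq]
    rw [Submodule.span_le]
    rintro _ ⟨i, rfl⟩
    have hsub : s (bas i) ⊆ Finset.univ.biUnion (fun i => s (bas i)) := by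
      intro χ hχ
      exact Finset.mem_biUnion.mpr ⟨i, Finset.mem_univ i, hχ⟩
    exact SetLike.le_def.mp (biSup_mono hsub) (hs (bas i))
  have hVS : DirectSum.IsInternal (fun χ : {x // x ∈ S} => Vsp χ.1) := by
    rw [DirectSum.isInternal_submodule_iff_iSupIndep_and_iSup_eq_top]
    constructor
    · exact (hOrth.comp Subtype.val_injective).independent
    · rw [← hS, iSup_subtype]
  have hOrthS := hOrth.comp
    (Subtype.val_injective : Function.Injective (fun χ : {x // x ∈ S} => χ.1))
  have hn' : Module.finrank ℂ (EuclideanSpace ℂ (Fin n)) = n := finrank_euclideanSpace_fin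
  set b := hVS.subordinateOrthonormalBasis hn' hOrthS with hb
  set χf : Fin n → ((Fin r × Fin r) × Bool → ℂ) :=
    fun a => (hVS.subordinateOrthonormalBasisIndex hn' a hOrthS).1 with hχf
  have heig : ∀ (a : Fin n) (i : (Fin r × Fin r) × Bool), T i (b a) = χf a i • b a := by
    intro a i
    have hmem := hVS.subordinateOrthonormalBasis_subordinate hn' a hOrthS
    exact Module.End.mem_eigenspace_iff.mp ((Submodule.mem_iInf _).mp hmem i)
  -- translate to matrices
  set V : Mat (Fin n) := Matrix.of (fun x a => b a x) with hVdef
  have hmv : ∀ (i : (Fin r × Fin r) × Bool) (a x : Fin n),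
      (∑ y, H i x y * b a y) = χf a i * b a x := by
    intro i a x
    have h2 := congrFun (congrArg (WithLp.equiv 2 (Fin n → ℂ)) (heig a i)) x
    simpa [hT, Matrix.toEuclideanLin_apply, Matrix.mulVec, dotProduct] using h2
  have hG_eq : ∀ j k, G j k
      = (2⁻¹ : ℂ) • (H ((j,k),true) - Complex.I • H ((j,k),false)) := by
    intro j k
    have hI : Complex.I • (Complex.I • (G j k - G k j)) = -(G j k - G k j) := by
      rw [smul_smul, Complex.I_mul_I, neg_one_smul]
    simp only [hH, if_true, Bool.false_eq_true, if_false]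
    rw [hI]
    module
  have hGmv : ∀ (j k : Fin r) (a x : Fin n),
      (∑ y, G j k x y * b a y)
        = ((2⁻¹ : ℂ) * (χf a ((j,k),true) - Complex.I * χf a ((j,k),false))) * b a x := by
    intro j k a x
    have h3 : ∀ y, G j k x y
        = 2⁻¹ * (H ((j,k),true) x y - Complex.I * H ((j,k),false) x y) := by
      intro y
      rw [hG_eq j k]
      simp [Matrix.smul_apply, Matrix.sub_apply, smul_eq_mul]
    calc ∑ y, G j k x y * b a y
        = ∑ y, (2⁻¹ * (H ((j,k),true) x y * b a y)
            - 2⁻¹ * (Complex.I * (H ((j,k),false) x y * b a y))) := by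
          refine Finset.sum_congr rfl fun y _ => ?_
          rw [h3 y]; ring
      _ = 2⁻¹ * (∑ y, H ((j,k),true) x y * b a y)
            - 2⁻¹ * (Complex.I * (∑ y, H ((j,k),false) x y * b a y)) := by
          rw [Finset.sum_sub_distrib, ← Finset.mul_sum, ← Finset.mul_sum, ← Finset.mul_sum,
            Finset.mul_sum]
      _ = _ := by rw [hmv, hmv]; ring
  have hVunit : Vᴴ * V = 1 := by
    ext a c
    have horth := orthonormal_iff_ite.mp b.orthonormal a c
    rw [Matrix.mul_apply, Matrix.one_apply]
    simp only [PiLp.inner_apply, RCLike.inner_apply, starRingEnd_apply] at horth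
    simpa [conjTranspose_apply, hVdef, Matrix.of_apply, mul_comm] using horth
  refine ⟨V, hVunit, fun j k => ?_⟩
  refine ⟨fun a => (2⁻¹ : ℂ) * (χf a ((j,k),true) - Complex.I * χf a ((j,k),false)), ?_⟩
  ext x a
  rw [Matrix.mul_apply, Matrix.mul_diagonal]
  show ∑ y, G j k x y * V y a = V x a * _
  calc ∑ y, G j k x y * V y a = ∑ y, G j k x y * b a y := rfl
    _ = _ := by rw [hGmv j k a x]; exact mul_comm _ _

set_option maxHeartbeats 1000000 in
lemma mpr_dir {n r : ℕ} (Φ : Mat (Fin n) →ₗ[ℂ] Mat (Fin n))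
    (A : Fin r → Mat (Fin n))
    (hA1 : ∀ X, Φ X = ∑ k, A k * X * (A k)ᴴ)
    (hA2 : ∑ k, (A k)ᴴ * A k = 1)
    (hc : ∀ j k j' k', Commute ((A j)ᴴ * A k) ((A j')ᴴ * A k')) :
    ∃ W V : Mat (Fin n), W ∈ Matrix.unitaryGroup (Fin n) ℂ ∧
      V ∈ Matrix.unitaryGroup (Fin n) ℂ ∧
      ∃ C : Mat (Fin n), (C.PosSemidef ∧ ∀ i, C i i = 1) ∧
        ∀ X, W * Φ (V * X * Vᴴ) * Wᴴ = Matrix.hadamard C X := by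
  classical
  obtain ⟨V, hVunit, hdiag⟩ := joint_diag A hc
  have hV1 : V * Vᴴ = 1 := mul_eq_one_comm.mp hVunit
  set B : Fin r → Mat (Fin n) := fun p => A p * V with hB
  have hBd : ∀ j k, ∃ d : Fin n → ℂ, (B j)ᴴ * B k = Matrix.diagonal d := by
    intro j k
    obtain ⟨d, hd⟩ := hdiag j k
    refine ⟨d, ?_⟩
    rw [hB]
    simp only [Matrix.conjTranspose_mul]
    calc Vᴴ * (A j)ᴴ * (A k * V) = Vᴴ * ((A j)ᴴ * A k * V) := by
          simp only [Matrix.mul_assoc]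
      _ = Vᴴ * (V * Matrix.diagonal d) := by rw [hd]
      _ = Matrix.diagonal d := by rw [← Matrix.mul_assoc, hVunit, one_mul]
  have hBsum : ∑ p, (B p)ᴴ * B p = 1 := by
    have h1 : ∀ p, (B p)ᴴ * B p = Vᴴ * ((A p)ᴴ * A p * V) := by
      intro p
      rw [hB]
      simp only [Matrix.conjTranspose_mul, Matrix.mul_assoc]
    rw [Finset.sum_congr rfl fun p _ => h1 p, ← Finset.mul_sum, ← Finset.sum_mul, hA2,
      one_mul, hVunit]
  have hdsum : ∀ i, ∑ p, ((B p)ᴴ * B p) i i = 1 := by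
    intro i
    rw [← Matrix.sum_apply i i Finset.univ (fun p => (B p)ᴴ * B p), hBsum, Matrix.one_apply_eq]
  have hentry : ∀ p q i l, ((B p)ᴴ * B q) i l = ∑ x, conj (B p x i) * B q x l := by
    intro p q i l
    rw [Matrix.mul_apply]
    simp [Matrix.conjTranspose_apply, Complex.star_def]
  have hex : ∀ i, ∃ p, ((B p)ᴴ * B p) i i ≠ 0 := by
    intro i
    by_contra h
    push_neg at h
    have := hdsum i
    rw [Finset.sum_eq_zero (fun p _ => h p)] at this
    exact one_ne_zero this.symm
  choose k0 hk0 using hex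
  set ρ : Fin n → ℝ := fun i => ∑ x, Complex.normSq (B (k0 i) x i) with hρdef
  have hρ : ∀ i, ((B (k0 i))ᴴ * B (k0 i)) i i = (ρ i : ℂ) := by
    intro i
    rw [hentry, hρdef]
    push_cast
    refine Finset.sum_congr rfl fun x _ => ?_
    rw [Complex.normSq_eq_conj_mul_self]
  have hρpos : ∀ i, 0 < ρ i := by
    intro i
    have hnn : 0 ≤ ρ i := Finset.sum_nonneg (fun x _ => Complex.normSq_nonneg _)
    rcases hnn.lt_or_eq with h | h
    · exact h
    · exact absurd (by rw [hρ i, ← h, Complex.ofReal_zero]) (hk0 i)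
  set si : Fin n → ℝ := fun i => Real.sqrt (ρ i) with hsi
  have hsipos : ∀ i, 0 < si i := fun i => Real.sqrt_pos.mpr (hρpos i)
  set w : Fin n → Fin n → ℂ := fun i x => ((si i : ℂ))⁻¹ * B (k0 i) x i with hw
  set W : Mat (Fin n) := Matrix.of (fun i x => conj (w i x)) with hW
  have hWmul : ∀ (M : Mat (Fin n)) i l,
      (W * M) i l = ((si i : ℂ))⁻¹ * ((B (k0 i))ᴴ * M) i l := by
    intro M i l
    rw [Matrix.mul_apply, Matrix.mul_apply, Finset.mul_sum]
    refine Finset.sum_congr rfl fun x _ => ?_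
    rw [hW]
    simp only [Matrix.of_apply, hw, Matrix.conjTranspose_apply, Complex.star_def,
      _root_.map_mul, map_inv₀, Complex.conj_ofReal]
    ring
  have hWentry : ∀ i l, (W * Wᴴ) i l
      = ((si i : ℂ))⁻¹ * ((si l : ℂ))⁻¹ * ((B (k0 i))ᴴ * B (k0 l)) i l := by
    intro i l
    rw [Matrix.mul_apply, hentry (k0 i) (k0 l) i l, Finset.mul_sum]
    refine Finset.sum_congr rfl fun x _ => ?_
    rw [hW]
    simp only [Matrix.conjTranspose_apply, Matrix.of_apply, hw, Complex.star_def,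
      _root_.map_mul, map_inv₀, Complex.conj_ofReal, Complex.conj_conj]
    ring
  have hWW : W * Wᴴ = 1 := by
    ext i l
    rw [hWentry]
    by_cases h : i = l
    · subst h
      rw [hρ i, Matrix.one_apply_eq]
      have hne : (si i : ℂ) ≠ 0 := by
        exact_mod_cast (hsipos i).ne'
      have hss : (si i : ℂ) * (si i : ℂ) = (ρ i : ℂ) := by
        rw [← Complex.ofReal_mul, Real.mul_self_sqrt (hρpos i).le]
      rw [← hss]
      field_simp
    · obtain ⟨d, hd⟩ := hBd (k0 i) (k0 l)
      rw [hd, Matrix.diagonal_apply_ne _ h, Matrix.one_apply_ne h, mul_zero]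
  have hW2 : Wᴴ * W = 1 := mul_eq_one_comm.mp hWW
  set E : Fin r → Mat (Fin n) := fun p => W * B p with hE
  have hEdiag : ∀ p (i l : Fin n), i ≠ l → E p i l = 0 := by
    intro p i l hil
    show (W * B p) i l = 0
    rw [hWmul]
    obtain ⟨d, hd⟩ := hBd (k0 i) p
    rw [hd, Matrix.diagonal_apply_ne _ hil, mul_zero]
  have hEsum : ∑ p, (E p)ᴴ * E p = 1 := by
    have h1 : ∀ p, (E p)ᴴ * E p = (B p)ᴴ * B p := by
      intro p
      show (W * B p)ᴴ * (W * B p) = _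
      rw [Matrix.conjTranspose_mul]
      calc (B p)ᴴ * Wᴴ * (W * B p) = (B p)ᴴ * ((Wᴴ * W) * B p) := by
            simp only [Matrix.mul_assoc]
        _ = (B p)ᴴ * B p := by rw [hW2, one_mul]
    rw [Finset.sum_congr rfl fun p _ => h1 p, hBsum]
  set C : Mat (Fin n) := (Matrix.of (fun p i => conj (E p i i)) : Matrix (Fin r) (Fin n) ℂ)ᴴ
      * (Matrix.of (fun p i => conj (E p i i)) : Matrix (Fin r) (Fin n) ℂ) with hC
  have hCentry : ∀ i l, C i l = ∑ p, E p i i * conj (E p l l) := by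
    intro i l
    rw [hC, Matrix.mul_apply]
    refine Finset.sum_congr rfl fun p _ => ?_
    simp only [Matrix.conjTranspose_apply, Matrix.of_apply, Complex.star_def, Complex.conj_conj]
  have hCpsd : C.PosSemidef := Matrix.posSemidef_conjTranspose_mul_self _
  have hCdiag : ∀ i, C i i = 1 := by
    intro i
    have h2 : ∀ p, ((E p)ᴴ * E p) i i = E p i i * conj (E p i i) := by
      intro p
      rw [Matrix.mul_apply]
      rw [Finset.sum_eq_single i]
      · rw [Matrix.conjTranspose_apply]
        simp only [Complex.star_def]
        ring
      · intro x _ hx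
        rw [hEdiag p x i hx, mul_zero]
      · intro h; exact absurd (Finset.mem_univ i) h
    calc C i i = ∑ p, ((E p)ᴴ * E p) i i := by
          rw [hCentry]
          exact Finset.sum_congr rfl fun p _ => (h2 p).symm
      _ = 1 := by
          rw [← Matrix.sum_apply i i Finset.univ (fun p => (E p)ᴴ * E p), hEsum,
            Matrix.one_apply_eq]
  refine ⟨W, V, ?_, ?_, C, ⟨hCpsd, hCdiag⟩, ?_⟩
  · rw [Matrix.mem_unitaryGroup_iff, Matrix.star_eq_conjTranspose]
    exact hWW
  · rw [Matrix.mem_unitaryGroup_iff', Matrix.star_eq_conjTranspose]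
    exact hVunit
  · intro X
    rw [hA1]
    have hterm : ∀ p, W * (A p * (V * X * Vᴴ) * (A p)ᴴ) * Wᴴ = E p * X * (E p)ᴴ := by
      intro p
      show _ = (W * B p) * X * (W * B p)ᴴ
      rw [hB]
      simp only [Matrix.conjTranspose_mul, Matrix.mul_assoc]
    rw [Matrix.mul_sum, Matrix.sum_mul]
    rw [Finset.sum_congr rfl fun p _ => hterm p]
    ext i l
    rw [Matrix.sum_apply, Matrix.hadamard_apply, hCentry, Finset.sum_mul]
    refine Finset.sum_congr rfl fun p _ => ?_
    have hXE : (E p * X) i l = E p i i * X i l := by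
      rw [Matrix.mul_apply, Finset.sum_eq_single i]
      · intro x _ hx
        rw [hEdiag p i x (Ne.symm hx), zero_mul]
      · intro h; exact absurd (Finset.mem_univ i) h
    calc (E p * X * (E p)ᴴ) i l = ∑ y, (E p * X) i y * conj (E p l y) := by
          rw [Matrix.mul_apply]
          refine Finset.sum_congr rfl fun y _ => ?_
          rw [Matrix.conjTranspose_apply, Complex.star_def]
      _ = (E p * X) i l * conj (E p l l) := by
          rw [Finset.sum_eq_single l]
          · intro y _ hy
            rw [hEdiag p l y (Ne.symm hy), map_zero, mul_zero]
          · intro h; exact absurd (Finset.mem_univ l) h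
      _ = E p i i * conj (E p l l) * X i l := by rw [hXE]; ring

end AuxStmt19

/-- Theorem 14 of the paper. A channel `Φ : M_n → M_n` is unitarily
equivalent to a Schur channel iff its operator system is a commuting family. -/
theorem stmt19 (n : ℕ) (hn : 0 < n)
    (Φ : Mat (Fin n) →ₗ[ℂ] Mat (Fin n)) (hΦ : IsChannel Φ) :
    (∃ W V : Mat (Fin n), W ∈ Matrix.unitaryGroup (Fin n) ℂ ∧
        V ∈ Matrix.unitaryGroup (Fin n) ℂ ∧
        ∃ C : Mat (Fin n), IsCorrelation C ∧
          ∀ X, W * Φ (V * X * Vᴴ) * Wᴴ = Matrix.hadamard C X) ↔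
      (∀ (r : ℕ) (A : Fin r → Mat (Fin n)), IsKrausRep Φ A →
        ∀ j k j' k', Commute ((A j)ᴴ * A k) ((A j')ᴴ * A k')) := by
  constructor
  · rintro ⟨W, V, hW, hV, C, ⟨hCpsd, hCdiag⟩, hSchur⟩ r A hKraus j k j' k'
    exact mp_dir Φ W V hW hV C hCpsd hSchur A hKraus.1 j k j' k'
  · intro hcomm
    obtain ⟨r, A, hA⟩ := hΦ
    obtain ⟨W, V, hW, hV, C, hC, hSchur⟩ := mpr_dir Φ A hA.1 hA.2 (hcomm r A hA)
    exact ⟨W, V, hW, hV, C, ⟨hC.1, hC.2⟩, hSchur⟩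
end
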